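/- Let B be a trimmed, aperiodic, polynomially ambiguous automaton. If B contains a cycle q →^{u^k} q reading u^k for some nonempty word u and k ≥ 1, then B contains a cycle q →^{u} q reading u itself. -/

import Mathlib

variable {Q Q' A R : Type*}

/-- `RunFrom Δ p w ρ`: `ρ` is the list of states visited after `p` along a run
reading `w` that starts in `p`. -/
def RunFrom (Δ : Q → A → Q → Prop) : Q → List A → List Q → Prop
  | _, [], [] => True
  | p, a :: w, q :: ρ => Δ p a q ∧ RunFrom Δ q w ρ
  | _, _, _ => False

/-- There is a run from `p` to `q` reading `w`. -/
def HasRun (Δ : Q → A → Q → Prop) (p : Q) (w : List A) (q : Q) : Prop :=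
  ∃ ρ, RunFrom Δ p w ρ ∧ (p :: ρ).getLast (List.cons_ne_nil _ _) = q

/-- `m`-fold power of a word. -/
def wpow (u : List A) (m : ℕ) : List A := (List.replicate m u).flatten

/-- Aperiodicity of a nondeterministic automaton. -/
def Aperiodic (Δ : Q → A → Q → Prop) : Prop :=
  ∃ m, 1 ≤ m ∧ ∀ (p q : Q) (u : List A), u ≠ [] →
    (HasRun Δ p (wpow u m) q ↔ HasRun Δ p (wpow u (m + 1)) q)

/-- `p` and `q` are in the same strongly connected component. -/
def SameSCC (Δ : Q → A → Q → Prop) (p q : Q) : Prop :=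
  p = q ∨ ((∃ u : List A, u ≠ [] ∧ HasRun Δ p u q) ∧ (∃ v : List A, v ≠ [] ∧ HasRun Δ q v p))

/-- The automaton is unambiguous from `p` to `q`. -/
def UnambFromTo (Δ : Q → A → Q → Prop) (p q : Q) : Prop :=
  ∀ (u : List A) (ρ₁ ρ₂ : List Q), u ≠ [] →
    RunFrom Δ p u ρ₁ → RunFrom Δ p u ρ₂ →
    (p :: ρ₁).getLast (List.cons_ne_nil _ _) = q →
    (p :: ρ₂).getLast (List.cons_ne_nil _ _) = q → ρ₁ = ρ₂

def SCCUnambiguous (Δ : Q → A → Q → Prop) : Prop :=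
  ∀ p q : Q, SameSCC Δ p q → UnambFromTo Δ p q

/-- The set of accepting runs on `w`, represented as pairs of an initial state and
the list of subsequently visited states. -/
def AccRuns (Δ : Q → A → Q → Prop) (I F : Set Q) (w : List A) : Set (Q × List Q) :=
  {x | x.1 ∈ I ∧ RunFrom Δ x.1 w x.2 ∧ (x.1 :: x.2).getLast (List.cons_ne_nil _ _) ∈ F}

/-- The sequence of weights along a run. -/
def wgtSeq (wgt : Q → A → Q → R) : Q → List A → List Q → List R
  | p, a :: w, q :: ρ => wgt p a q :: wgtSeq wgt q w ρ
  | _, _, _ => []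



section Helpers

def lastSt (p : Q) (ρ : List Q) : Q := (p :: ρ).getLast (List.cons_ne_nil _ _)

@[simp] lemma lastSt_nil (p : Q) : lastSt p [] = p := rfl
@[simp] lemma lastSt_cons (p a : Q) (ρ : List Q) : lastSt p (a :: ρ) = lastSt a ρ := by
  simp [lastSt, List.getLast_cons_cons]

lemma lastSt_append (p : Q) (ρ1 ρ2 : List Q) :
    lastSt p (ρ1 ++ ρ2) = lastSt (lastSt p ρ1) ρ2 := by
  induction ρ1 generalizing p with
  | nil => simp
  | cons a t ih => simp [ih]

@[simp] lemma runFrom_nil {Δ : Q → A → Q → Prop} {p : Q} {ρ : List Q} :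
    RunFrom Δ p [] ρ ↔ ρ = [] := by
  cases ρ <;> simp [RunFrom]

@[simp] lemma runFrom_cons {Δ : Q → A → Q → Prop} {p : Q} {a : A} {w : List A} {ρ : List Q} :
    RunFrom Δ p (a :: w) ρ ↔ ∃ r ρ', ρ = r :: ρ' ∧ Δ p a r ∧ RunFrom Δ r w ρ' := by
  cases ρ with
  | nil => simp [RunFrom]
  | cons r ρ' =>
    show (Δ p a r ∧ RunFrom Δ r w ρ') ↔ _
    constructor
    · rintro ⟨hd, hr⟩; exact ⟨r, ρ', rfl, hd, hr⟩
    · rintro ⟨r2, ρ2, h, hd, hr⟩; cases h; exact ⟨hd, hr⟩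

lemma runFrom_length {Δ : Q → A → Q → Prop} {p : Q} {w : List A} {ρ : List Q}
    (h : RunFrom Δ p w ρ) : ρ.length = w.length := by
  induction w generalizing p ρ with
  | nil => simp_all
  | cons a w ih =>
    rw [runFrom_cons] at h
    obtain ⟨r, ρ', rfl, _, h⟩ := h
    simp [ih h]

lemma runFrom_append {Δ : Q → A → Q → Prop} {p : Q} {w1 w2 : List A} {ρ1 ρ2 : List Q}
    (h1 : RunFrom Δ p w1 ρ1) (h2 : RunFrom Δ (lastSt p ρ1) w2 ρ2) :
    RunFrom Δ p (w1 ++ w2) (ρ1 ++ ρ2) := by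
  induction w1 generalizing p ρ1 with
  | nil => rw [runFrom_nil] at h1; subst h1; simpa using h2
  | cons a w ih =>
    rw [runFrom_cons] at h1
    obtain ⟨r, ρ', rfl, hd, h1⟩ := h1
    simp only [lastSt_cons] at h2
    exact ⟨hd, ih h1 h2⟩

lemma runFrom_split {Δ : Q → A → Q → Prop} {p : Q} {w1 w2 : List A} {ρ : List Q}
    (h : RunFrom Δ p (w1 ++ w2) ρ) :
    ∃ ρ1 ρ2, ρ = ρ1 ++ ρ2 ∧ ρ1.length = w1.length ∧ RunFrom Δ p w1 ρ1 ∧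
      RunFrom Δ (lastSt p ρ1) w2 ρ2 := by
  induction w1 generalizing p ρ with
  | nil => exact ⟨[], ρ, by simpa using h⟩
  | cons a w ih =>
    rw [List.cons_append, runFrom_cons] at h
    obtain ⟨r, ρ', rfl, hd, h⟩ := h
    obtain ⟨ρ1, ρ2, rfl, hl, h1, h2⟩ := ih h
    exact ⟨r :: ρ1, ρ2, rfl, by simp [hl], ⟨hd, h1⟩, by simpa using h2⟩

lemma mem_run_split {Δ : Q → A → Q → Prop} {p q : Q} {w : List A} {ρ : List Q}
    (h : RunFrom Δ p w ρ) (hq : q ∈ p :: ρ) :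
    ∃ w1 w2 ρ1 ρ2, w = w1 ++ w2 ∧ ρ = ρ1 ++ ρ2 ∧ RunFrom Δ p w1 ρ1 ∧
      lastSt p ρ1 = q ∧ RunFrom Δ q w2 ρ2 := by
  induction w generalizing p ρ with
  | nil =>
    rw [runFrom_nil] at h; subst h
    simp only [List.mem_singleton] at hq; subst hq
    exact ⟨[], [], [], [], rfl, rfl, trivial, rfl, trivial⟩
  | cons a w ih =>
    rw [runFrom_cons] at h
    obtain ⟨r, ρ', rfl, hd, h⟩ := h
    rcases List.mem_cons.mp hq with rfl | hq
    · exact ⟨[], a :: w, [], r :: ρ', rfl, rfl, trivial, rfl, runFrom_cons.mpr ⟨r, ρ', rfl, hd, h⟩⟩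
    · obtain ⟨w1, w2, ρ1, ρ2, rfl, rfl, h1, hl, h2⟩ := ih h hq
      exact ⟨a :: w1, w2, r :: ρ1, ρ2, rfl, rfl, ⟨hd, h1⟩, by simpa using hl, h2⟩

lemma hasRun_iff {Δ : Q → A → Q → Prop} {p q : Q} {w : List A} :
    HasRun Δ p w q ↔ ∃ ρ, RunFrom Δ p w ρ ∧ lastSt p ρ = q := Iff.rfl

@[simp] lemma wpow_zero (u : List A) : wpow u 0 = [] := rfl
@[simp] lemma wpow_succ (u : List A) (n : ℕ) : wpow u (n + 1) = u ++ wpow u n := by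
  simp [wpow, List.replicate_succ]

lemma wpow_add (u : List A) (m n : ℕ) : wpow u (m + n) = wpow u m ++ wpow u n := by
  induction m with
  | zero => simp
  | succ m ih => rw [Nat.succ_add, wpow_succ, wpow_succ, ih, List.append_assoc]

@[simp] lemma wpow_one (u : List A) : wpow u 1 = u := by simp

@[simp] lemma wpow_length (u : List A) (n : ℕ) : (wpow u n).length = n * u.length := by
  induction n with
  | zero => simp
  | succ n ih => simp [ih, Nat.succ_mul]; ring

lemma wpow_ne_nil {u : List A} (hu : u ≠ []) {n : ℕ} (hn : 1 ≤ n) : wpow u n ≠ [] := by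
  obtain ⟨n, rfl⟩ : ∃ m, n = m + 1 := ⟨n - 1, by omega⟩
  simp [hu]

lemma hasRun_append {Δ : Q → A → Q → Prop} {p r s : Q} {w1 w2 : List A}
    (h1 : HasRun Δ p w1 r) (h2 : HasRun Δ r w2 s) : HasRun Δ p (w1 ++ w2) s := by
  obtain ⟨ρ1, hr1, hl1⟩ := hasRun_iff.mp h1
  obtain ⟨ρ2, hr2, hl2⟩ := hasRun_iff.mp h2
  refine hasRun_iff.mpr ⟨ρ1 ++ ρ2, runFrom_append hr1 ?_, ?_⟩
  · rw [hl1]; exact hr2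
  · rw [lastSt_append, hl1, hl2]

lemma hasRun_split {Δ : Q → A → Q → Prop} {p s : Q} {w1 w2 : List A}
    (h : HasRun Δ p (w1 ++ w2) s) : ∃ r, HasRun Δ p w1 r ∧ HasRun Δ r w2 s := by
  obtain ⟨ρ, hr, hl⟩ := hasRun_iff.mp h
  obtain ⟨ρ1, ρ2, rfl, _, h1, h2⟩ := runFrom_split hr
  rw [lastSt_append] at hl
  exact ⟨lastSt p ρ1, hasRun_iff.mpr ⟨ρ1, h1, rfl⟩, hasRun_iff.mpr ⟨ρ2, h2, hl⟩⟩

lemma hasRun_wpow {Δ : Q → A → Q → Prop} {q : Q} {w : List A} (h : HasRun Δ q w q) :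
    ∀ n, HasRun Δ q (wpow w n) q := by
  intro n
  induction n with
  | zero => exact hasRun_iff.mpr ⟨[], trivial, rfl⟩
  | succ n ih => rw [wpow_succ]; exact hasRun_append h ih

lemma aperiodic_step {Δ : Q → A → Q → Prop} {m : ℕ}
    (hm : ∀ (p q : Q) (u : List A), u ≠ [] →
      (HasRun Δ p (wpow u m) q ↔ HasRun Δ p (wpow u (m + 1)) q))
    {p q : Q} {u : List A} (hu : u ≠ []) {N : ℕ} (hN : m ≤ N) :
    HasRun Δ p (wpow u N) q ↔ HasRun Δ p (wpow u (N + 1)) q := by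
  obtain ⟨j, rfl⟩ : ∃ j, N = m + j := ⟨N - m, by omega⟩
  constructor
  · intro h
    rw [wpow_add] at h
    obtain ⟨r, h1, h2⟩ := hasRun_split h
    have h1' := (hm p r u hu).mp h1
    have : HasRun Δ p (wpow u (m + 1) ++ wpow u j) q := hasRun_append h1' h2
    rwa [← wpow_add, Nat.add_right_comm] at this
  · intro h
    rw [Nat.add_right_comm, wpow_add] at h
    obtain ⟨r, h1, h2⟩ := hasRun_split h
    have h1' := (hm p r u hu).mpr h1
    have : HasRun Δ p (wpow u m ++ wpow u j) q := hasRun_append h1' h2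
    rwa [← wpow_add] at this

lemma poly_lt_two_pow (P : Polynomial ℕ) (a b : ℕ) :
    ∃ n, 1 ≤ n ∧ P.eval (a + n * b) < 2 ^ n := by
  set Qp : Polynomial ℕ := P.comp (Polynomial.C a + Polynomial.C b * Polynomial.X) with hQ
  have heval : ∀ n, P.eval (a + n * b) = Qp.eval n := by
    intro n
    simp [hQ, Polynomial.eval_comp, Nat.mul_comm]
  set C := Qp.eval 1 with hC
  set d := Qp.natDegree with hd
  have hbound : ∀ n, 1 ≤ n → Qp.eval n ≤ C * n ^ d := by
    intro n hn
    rw [Polynomial.eval_eq_sum_range, hC, Polynomial.eval_eq_sum_range]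
    rw [Finset.sum_mul]
    apply Finset.sum_le_sum
    intro i hi
    simp only [one_pow, mul_one]
    exact Nat.mul_le_mul_left _ (Nat.pow_le_pow_right hn (by
      simp only [Finset.mem_range] at hi; omega))
  have htend := tendsto_pow_const_div_const_pow_of_one_lt d (by norm_num : (1:ℝ) < 2)
  have hev : ∀ᶠ n : ℕ in Filter.atTop, (n : ℝ) ^ d / 2 ^ n < 1 / (C + 1) := by
    have := htend.eventually (eventually_lt_nhds (by positivity : (0:ℝ) < 1 / (C + 1)))
    simpa using this
  obtain ⟨n, hlt, hn1⟩ := (hev.and (Filter.eventually_ge_atTop 1)).exists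
  refine ⟨n, hn1, ?_⟩
  have h2 : (0:ℝ) < 2 ^ n := by positivity
  rw [div_lt_div_iff₀ h2 (by positivity)] at hlt
  have hR : ((C : ℝ) + 1) * (n : ℝ) ^ d < 2 ^ n := by
    nlinarith [pow_pos (by norm_num : (0:ℝ) < 2) n]
  have hle : ((Qp.eval n : ℕ) : ℝ) ≤ (C : ℝ) * (n : ℝ) ^ d := by
    exact_mod_cast Nat.cast_le.mpr (hbound n hn1)
  have : ((Qp.eval n : ℕ) : ℝ) < 2 ^ n := lt_of_le_of_lt hle (lt_of_le_of_lt
    (by nlinarith [pow_nonneg (by positivity : (0:ℝ) ≤ (n:ℝ)) d]) hR)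
  rw [heval]
  exact_mod_cast this

lemma flatten_inj {α : Type*} (L : ℕ) : ∀ (l1 l2 : List (List α)), l1.length = l2.length →
    (∀ x ∈ l1, x.length = L) → (∀ x ∈ l2, x.length = L) → l1.flatten = l2.flatten → l1 = l2 := by
  intro l1
  induction l1 with
  | nil => intro l2 h _ _ _; cases l2 <;> simp_all
  | cons x t ih =>
    intro l2 h h1 h2 hf
    cases l2 with
    | nil => simp at h
    | cons y s =>
      simp only [List.flatten_cons] at hf
      have hxy : x = y ∧ t.flatten = s.flatten := by
        apply List.append_inj hf
        rw [h1 x (by simp), h2 y (by simp)]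
      obtain ⟨rfl, hts⟩ := hxy
      rw [ih s (by simpa using h) (fun z hz => h1 z (by simp [hz]))
        (fun z hz => h2 z (by simp [hz])) hts]


lemma wpow_wpow (u : List A) (a b : ℕ) : wpow (wpow u a) b = wpow u (a * b) := by
  induction b with
  | zero => simp
  | succ b ih => rw [wpow_succ, ih, Nat.mul_succ, Nat.add_comm, wpow_add]

lemma runFrom_flatten {Δ : Q → A → Q → Prop} {q : Q} {w : List A} (l : List (List Q))
    (h : ∀ ρ ∈ l, RunFrom Δ q w ρ ∧ lastSt q ρ = q) :
    RunFrom Δ q (wpow w l.length) l.flatten ∧ lastSt q l.flatten = q := by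
  induction l with
  | nil => exact ⟨trivial, rfl⟩
  | cons x t ih =>
    obtain ⟨hx, hlx⟩ := h x List.mem_cons_self
    obtain ⟨ht, hlt⟩ := ih (fun ρ hρ => h ρ (List.mem_cons_of_mem _ hρ))
    constructor
    · rw [List.length_cons, wpow_succ, List.flatten_cons]
      exact runFrom_append hx (by rw [hlx]; exact ht)
    · rw [List.flatten_cons, lastSt_append, hlx, hlt]

lemma unamb_self [Fintype Q] (Δ : Q → A → Q → Prop) (I F : Set Q)
    (htrim : ∀ q : Q, ∃ (w : List A) (x : Q × List Q),
      x ∈ AccRuns Δ I F w ∧ q ∈ x.1 :: x.2)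
    (hpoly : ∃ P : Polynomial ℕ, ∀ w : List A, w ≠ [] →
      (AccRuns Δ I F w).ncard ≤ P.eval w.length)
    (q : Q) : UnambFromTo Δ q q := by
  intro w ρ1 ρ2 hw h1 h2 e1 e2
  by_contra hne
  obtain ⟨P, hP⟩ := hpoly
  obtain ⟨w0, x, hx, hqmem⟩ := htrim q
  obtain ⟨i, ρ0⟩ := x
  obtain ⟨hI, hrun0, hF⟩ := hx
  simp only at hqmem hI hrun0 hF
  obtain ⟨α, β, σ1, σ2, rfl, rfl, hσ1, hσ1l, hσ2⟩ := mem_run_split hrun0 hqmem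
  have hF' : lastSt q σ2 ∈ F := by
    have : lastSt i (σ1 ++ σ2) ∈ F := hF
    rwa [lastSt_append, hσ1l] at this
  set L := w.length with hL
  have hl1 : ρ1.length = L := runFrom_length h1
  have hl2 : ρ2.length = L := runFrom_length h2
  obtain ⟨n, hn1, hlt⟩ := poly_lt_two_pow P (α.length + β.length) L
  set W := α ++ (wpow w n ++ β) with hW
  have hWne : W ≠ [] := by
    have h0 := wpow_ne_nil hw hn1
    intro hc
    rcases List.append_eq_nil_iff.mp hc with ⟨_, hc2⟩
    rcases List.append_eq_nil_iff.mp hc2 with ⟨hc3, _⟩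
    exact h0 hc3
  have hWlen : W.length = α.length + β.length + n * L := by
    simp [hW, hL]; ring
  set blocks : (Fin n → Bool) → List (List Q) :=
    fun c => List.ofFn (fun j => if c j then ρ1 else ρ2) with hblocksdef
  have hblocks : ∀ c, ∀ ρ ∈ blocks c, RunFrom Δ q w ρ ∧ lastSt q ρ = q := by
    intro c ρ hρ
    rw [hblocksdef, List.mem_ofFn] at hρ
    obtain ⟨j, hj⟩ := hρ
    by_cases hc : c j
    · rw [← hj]; simp only [hc, if_true]; exact ⟨h1, e1⟩
    · rw [← hj]; simp only [hc, if_false]; exact ⟨h2, e2⟩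
  set G : (Fin n → Bool) → Q × List Q :=
    fun c => (i, σ1 ++ ((blocks c).flatten ++ σ2)) with hGdef
  have hGmem : ∀ c, G c ∈ AccRuns Δ I F W := by
    intro c
    obtain ⟨hbr, hbl⟩ := runFrom_flatten (blocks c) (hblocks c)
    have hlen : (blocks c).length = n := by simp [hblocksdef]
    rw [hlen] at hbr
    refine ⟨hI, ?_, ?_⟩
    · exact runFrom_append hσ1 (by
        rw [hσ1l]; exact runFrom_append hbr (by rw [hbl]; exact hσ2))
    · show lastSt i (σ1 ++ _) ∈ F
      rw [lastSt_append, hσ1l, lastSt_append, hbl]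
      exact hF'
  have hGinj : Function.Injective G := by
    intro c c' hG
    have h2' : (blocks c).flatten ++ σ2 = (blocks c').flatten ++ σ2 :=
      List.append_cancel_left (congrArg Prod.snd hG)
    have h3 : (blocks c).flatten = (blocks c').flatten := List.append_cancel_right h2'
    have h4 : blocks c = blocks c' := by
      refine flatten_inj L _ _ (by simp [hblocksdef]) ?_ ?_ h3 <;>
      · intro z hz
        rw [hblocksdef, List.mem_ofFn] at hz
        obtain ⟨j, rfl⟩ := hz
        simp only [apply_ite List.length, hl1, hl2, ite_self]
    have h5 := List.ofFn_injective h4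
    funext j
    have h6 := congrFun h5 j
    by_cases hc : c j <;> by_cases hc' : c' j <;>
      simp only [hc, hc', if_true, if_false] at h6 ⊢
    · exact (hne h6).elim
    · exact (hne h6.symm).elim
  have hfin : (AccRuns Δ I F W).Finite := by
    apply Set.Finite.subset
      (Set.Finite.prod (Set.finite_univ (α := Q)) (List.finite_length_eq Q W.length))
    rintro ⟨p, ρ⟩ ⟨_, hr, _⟩
    exact ⟨trivial, runFrom_length hr⟩
  have hsub : Set.range G ⊆ AccRuns Δ I F W := by
    rintro _ ⟨c, rfl⟩; exact hGmem c
  have hcard : 2 ^ n ≤ (AccRuns Δ I F W).ncard := by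
    have hrg : (Set.range G).ncard = 2 ^ n := by
      show Nat.card _ = _
      rw [Nat.card_range_of_injective hGinj, Nat.card_eq_fintype_card]
      simp
    rw [← hrg]
    exact Set.ncard_le_ncard hsub hfin
  have hfinal := hP W hWne
  rw [hWlen] at hfinal
  omega

end Helpers


/-- In a trimmed, aperiodic, polynomially ambiguous automaton, if some power `u^k`
(`k ≥ 1`, `u` nonempty) labels a cycle at `q`, then `u` itself labels a cycle at `q`. -/
theorem cycle_of_power_cycle [Fintype Q] (Δ : Q → A → Q → Prop) (I F : Set Q)
    (htrim : ∀ q : Q, ∃ (w : List A) (x : Q × List Q),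
      x ∈ AccRuns Δ I F w ∧ q ∈ x.1 :: x.2)
    (hap : Aperiodic Δ)
    (hpoly : ∃ P : Polynomial ℕ, ∀ w : List A, w ≠ [] →
      (AccRuns Δ I F w).ncard ≤ P.eval w.length)
    (q : Q) (u : List A) (hu : u ≠ []) (k : ℕ) (hk : 1 ≤ k)
    (hcyc : HasRun Δ q (wpow u k) q) : HasRun Δ q u q := by
  obtain ⟨m, hm1, hm⟩ := hap
  have unq : UnambFromTo Δ q q := unamb_self Δ I F htrim hpoly q
  -- a cycle on u^(k*m)
  have hkm : HasRun Δ q (wpow u (k * m)) q := by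
    have := hasRun_wpow hcyc m
    rwa [wpow_wpow] at this
  set N := k * m with hN
  have hmN : m ≤ N := by
    calc m = 1 * m := (one_mul m).symm
    _ ≤ k * m := Nat.mul_le_mul_right m hk
  have hN1 : 1 ≤ N := le_trans hm1 hmN
  have hsucc : HasRun Δ q (wpow u (N + 1)) q :=
    (aperiodic_step hm hu hmN).mp hkm
  obtain ⟨ρ, hρ, hρl⟩ := hasRun_iff.mp hkm
  obtain ⟨τ, hτ, hτl⟩ := hasRun_iff.mp hsucc
  -- two runs q → q reading u^(2N+1): ρ ++ τ and τ ++ ρ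
  have hA : RunFrom Δ q (wpow u (2 * N + 1)) (ρ ++ τ) := by
    have : RunFrom Δ q (wpow u N ++ wpow u (N + 1)) (ρ ++ τ) :=
      runFrom_append hρ (by rw [hρl]; exact hτ)
    rwa [← wpow_add, show N + (N + 1) = 2 * N + 1 by ring] at this
  have hB : RunFrom Δ q (wpow u (2 * N + 1)) (τ ++ ρ) := by
    have : RunFrom Δ q (wpow u (N + 1) ++ wpow u N) (τ ++ ρ) :=
      runFrom_append hτ (by rw [hτl]; exact hρ)
    rwa [← wpow_add, show N + 1 + N = 2 * N + 1 by ring] at this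
  have hAl : lastSt q (ρ ++ τ) = q := by rw [lastSt_append, hρl, hτl]
  have hBl : lastSt q (τ ++ ρ) = q := by rw [lastSt_append, hτl, hρl]
  have hAB : ρ ++ τ = τ ++ ρ :=
    unq (wpow u (2 * N + 1)) (ρ ++ τ) (τ ++ ρ) (wpow_ne_nil hu (by omega)) hA hB hAl hBl
  -- split τ as a run on u^N ++ u
  have hτ' : RunFrom Δ q (wpow u N ++ u) τ := by
    rwa [show wpow u (N + 1) = wpow u N ++ u from by rw [wpow_add, wpow_one]] at hτ
  obtain ⟨τ1, τ2, hτeq, hτ1len, hτ1, hτ2⟩ := runFrom_split hτ'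
  -- τ1 = ρ : compare prefixes of length ρ.length in ρ ++ τ = τ ++ ρ = τ1 ++ τ2 ++ ρ
  have hρlen : ρ.length = N * u.length := by rw [runFrom_length hρ, wpow_length]
  have hτ1len' : τ1.length = ρ.length := by rw [hτ1len, wpow_length, hρlen]
  have hτ1ρ : τ1 = ρ := by
    have h1' : (ρ ++ τ).take ρ.length = ρ := List.take_left
    have h2' : (τ ++ ρ).take ρ.length = τ1 := by
      rw [hτeq, List.append_assoc, ← hτ1len', List.take_left]
    rw [hAB] at h1'
    rw [h2'] at h1'
    exact h1'
  rw [hτ1ρ] at hτ2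
  rw [hρl] at hτ2
  refine hasRun_iff.mpr ⟨τ2, hτ2, ?_⟩
  have : lastSt q τ = q := hτl
  rw [hτeq, hτ1ρ, lastSt_append, hρl] at this
  exact this
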